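/- In the no-overbidding equilibrium with any tie-breaking rule, if buyer i is a monopsonist at a decision node x (i.e. f_{−i}(x) = 0), then buyer i's equilibrium forward utility equals her greedy utility, u_i(x) = μ_i(x), and consequently her equilibrium bid at x satisfies b_i(x) = min( v_i(1|x), p_i(x) ). -/

import Mathlib

open Finset

noncomputable section

/-- The opponent of buyer `i`. -/
def other (i : Fin 2) : Fin 2 := 1 - i

/-- The standard unit vector of buyer `i`: winning one item moves `x` to `x + e i`. -/
def e (i : Fin 2) : Fin 2 → ℕ := Pi.single i 1

/-- Remaining supply `t(x) = T - x₁ - x₂` at node `x`. -/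
def supply (T : ℕ) (x : Fin 2 → ℕ) : ℕ := T - (x 0 + x 1)

/-- `x` is a decision node: `x₁ + x₂ < T`. -/
def IsDecision (T : ℕ) (x : Fin 2 → ℕ) : Prop := x 0 + x 1 < T

/-- Incremental value `v_i(k|x) = v_i(x_i + k)`. -/
def val (v : Fin 2 → ℕ → ℝ) (i : Fin 2) (k : ℕ) (x : Fin 2 → ℕ) : ℝ := v i (x i + k)

/-- Valuations are nonnegative and weakly decreasing. -/
def Admissible (v : Fin 2 → ℕ → ℝ) : Prop := ∀ i k, 0 ≤ v i k ∧ v i (k + 1) ≤ v i k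

/-- Greedy payoff `μ̄_i(k|x) = Σ_{j=1}^k v_i(j|x) - k · v_{-i}(t-k+1|x)`. -/
def gbar (T : ℕ) (v : Fin 2 → ℕ → ℝ) (i : Fin 2) (k : ℕ) (x : Fin 2 → ℕ) : ℝ :=
  (∑ j ∈ Finset.Icc 1 k, val v i j x) - (k : ℝ) * val v (other i) (supply T x - k + 1) x

/-- Greedy utility `μ_i(x) = max_{0 ≤ k ≤ t} μ̄_i(k|x)` (equal to `0` at terminal nodes). -/
def gu (T : ℕ) (v : Fin 2 → ℕ → ℝ) (i : Fin 2) (x : Fin 2 → ℕ) : ℝ :=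
  Finset.sup' (Finset.range (supply T x + 1)) Finset.nonempty_range_add_one
    (fun k => gbar T v i k x)

/-- Greedy demand `κ_i(x)`: the least `k ∈ {0,…,t}` attaining the greedy utility. -/
def gd (T : ℕ) (v : Fin 2 → ℕ → ℝ) (i : Fin 2) (x : Fin 2 → ℕ) : ℕ :=
  sInf {k | k ≤ supply T x ∧ gbar T v i k x = gu T v i x}

/-- Duopsony factor `f_i(x) = max ({k ∈ {1,…,t} : v_i(k|x) > v_{-i}(t-k+1|x)} ∪ {0})`. -/
def df (T : ℕ) (v : Fin 2 → ℕ → ℝ) (i : Fin 2) (x : Fin 2 → ℕ) : ℕ :=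
  sSup {k | 1 ≤ k ∧ k ≤ supply T x ∧
    val v (other i) (supply T x - k + 1) x < val v i k x}

/-- Baseline price `β_i(x)`. -/
def base (T : ℕ) (v : Fin 2 → ℕ → ℝ) (i : Fin 2) (x : Fin 2 → ℕ) : ℝ :=
  if df T v i x = 0 then val v i 1 x
  else val v (other i) (supply T x - gd T v i x + 1) x

/-- Threshold price `p_i(x) = v_i(1|x) + μ_i(x+e_i) - μ_i(x+e_{-i})`. -/
def tp (T : ℕ) (v : Fin 2 → ℕ → ℝ) (i : Fin 2) (x : Fin 2 → ℕ) : ℝ :=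
  val v i 1 x + gu T v i (x + e i) - gu T v i (x + e (other i))

/-- A tie-breaking rule: probabilities assigned to the two buyers at each decision node. -/
def TieBreaking (T : ℕ) (π : Fin 2 → (Fin 2 → ℕ) → ℝ) : Prop :=
  ∀ x : Fin 2 → ℕ, IsDecision T x →
    (∀ i, 0 ≤ π i x ∧ π i x ≤ 1) ∧ π 0 x + π 1 x = 1

/-- The no-overbidding equilibrium for the tie-breaking rule `π`, described by its
forward utilities `u`, bids `b` and winning probabilities `q`, which satisfy the
defining backward recursion. -/
structure Equilibrium (T : ℕ) (v : Fin 2 → ℕ → ℝ) (π : Fin 2 → (Fin 2 → ℕ) → ℝ) where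
  u : Fin 2 → (Fin 2 → ℕ) → ℝ
  b : Fin 2 → (Fin 2 → ℕ) → ℝ
  q : Fin 2 → (Fin 2 → ℕ) → ℝ
  u_terminal : ∀ i x, ¬ IsDecision T x → u i x = 0
  bid_def : ∀ i x, IsDecision T x →
    b i x = min (val v i 1 x) (val v i 1 x + u i (x + e i) - u i (x + e (other i)))
  q_win : ∀ i x, IsDecision T x → b (other i) x < b i x → q i x = 1
  q_lose : ∀ i x, IsDecision T x → b i x < b (other i) x → q i x = 0
  q_tie : ∀ i x, IsDecision T x → b i x = b (other i) x → q i x = π i x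
  u_def : ∀ i x, IsDecision T x →
    u i x = q i x * (val v i 1 x - b (other i) x + u i (x + e i))
            + (1 - q i x) * u i (x + e (other i))

/-- The price paid at node `x`: the lower of the two bids. -/
def price {T : ℕ} {v : Fin 2 → ℕ → ℝ} {π : Fin 2 → (Fin 2 → ℕ) → ℝ}
    (E : Equilibrium T v π) (x : Fin 2 → ℕ) : ℝ := min (E.b 0 x) (E.b 1 x)

lemma other_other (i : Fin 2) : other (other i) = i := by fin_cases i <;> decide
lemma other_ne (i : Fin 2) : other i ≠ i := by fin_cases i <;> decide
lemma apply_e_self (x : Fin 2 → ℕ) (i : Fin 2) : (x + e i) i = x i + 1 := by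
  simp [e, Pi.single_eq_same]
lemma apply_e_ne (x : Fin 2 → ℕ) {i k : Fin 2} (h : k ≠ i) : (x + e i) k = x k := by
  simp [e, Pi.single_eq_of_ne h]
lemma coords_add_e (x : Fin 2 → ℕ) (i : Fin 2) :
    (x + e i) 0 + (x + e i) 1 = x 0 + x 1 + 1 := by
  fin_cases i <;> simp [e, Pi.single_apply] <;> ring
lemma supply_add_e (T : ℕ) (x : Fin 2 → ℕ) (i : Fin 2) :
    supply T (x + e i) = supply T x - 1 := by
  simp only [supply, coords_add_e]; omega
lemma supply_pos (T : ℕ) {x : Fin 2 → ℕ} (h : IsDecision T x) : 1 ≤ supply T x := by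
  simp only [IsDecision] at h; simp only [supply]; omega
lemma decision_child {T : ℕ} {x : Fin 2 → ℕ} (h : 2 ≤ supply T x) (i : Fin 2) :
    IsDecision T (x + e i) := by
  simp only [supply] at h; simp only [IsDecision, coords_add_e]; omega
lemma not_decision_of_supply_zero {T : ℕ} {x : Fin 2 → ℕ} (h : supply T x = 0) :
    ¬ IsDecision T x := by simp only [supply] at h; simp only [IsDecision]; omega
lemma supply_zero_of_not_decision {T : ℕ} {x : Fin 2 → ℕ} (h : ¬ IsDecision T x) :
    supply T x = 0 := by simp only [IsDecision] at h; simp only [supply]; omega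

lemma vmono {v : Fin 2 → ℕ → ℝ} (hv : Admissible v) (i : Fin 2) {p q : ℕ} (h : p ≤ q) :
    v i q ≤ v i p := by
  induction q with
  | zero => simp_all
  | succ n ih =>
    rcases Nat.lt_or_ge p (n+1) with hp | hp
    · exact le_trans (hv i n).2 (ih (by omega))
    · have : p = n + 1 := by omega
      simp [this]
lemma val_antitone {v : Fin 2 → ℕ → ℝ} (hv : Admissible v) (i : Fin 2) {k m : ℕ}
    (h : k ≤ m) (x : Fin 2 → ℕ) : val v i m x ≤ val v i k x :=
  vmono hv i (by omega)
lemma val_nonneg {v : Fin 2 → ℕ → ℝ} (hv : Admissible v) (i : Fin 2) (k : ℕ)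
    (x : Fin 2 → ℕ) : 0 ≤ val v i k x := (hv i _).1
lemma val_shift_self (v : Fin 2 → ℕ → ℝ) (i : Fin 2) (k : ℕ) (x : Fin 2 → ℕ) :
    val v i k (x + e i) = val v i (k+1) x := by
  show v i ((x + e i) i + k) = v i (x i + (k+1))
  rw [apply_e_self]; congr 1; omega
lemma val_shift_ne (v : Fin 2 → ℕ → ℝ) {i m : Fin 2} (h : i ≠ m) (k : ℕ) (x : Fin 2 → ℕ) :
    val v i k (x + e m) = val v i k x := by
  show v i ((x + e m) i + k) = v i (x i + k)
  rw [apply_e_ne x h]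

lemma gbar_zero (T : ℕ) (v : Fin 2 → ℕ → ℝ) (i : Fin 2) (x : Fin 2 → ℕ) :
    gbar T v i 0 x = 0 := by simp [gbar]

lemma le_gu (T : ℕ) (v : Fin 2 → ℕ → ℝ) (i : Fin 2) {k : ℕ} {x : Fin 2 → ℕ}
    (hk : k ≤ supply T x) : gbar T v i k x ≤ gu T v i x :=
  Finset.le_sup' (fun k => gbar T v i k x) (Finset.mem_range.2 (by omega))

lemma gu_le (T : ℕ) (v : Fin 2 → ℕ → ℝ) (i : Fin 2) {x : Fin 2 → ℕ} {M : ℝ}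
    (h : ∀ k, k ≤ supply T x → gbar T v i k x ≤ M) : gu T v i x ≤ M :=
  Finset.sup'_le _ _ (fun k hk => h k (by simpa using Nat.lt_succ_iff.1 (Finset.mem_range.1 hk)))

lemma gu_nonneg (T : ℕ) (v : Fin 2 → ℕ → ℝ) (i : Fin 2) (x : Fin 2 → ℕ) :
    0 ≤ gu T v i x := by
  have := le_gu T v i (k := 0) (x := x) (Nat.zero_le _)
  rwa [gbar_zero] at this

lemma exists_gu (T : ℕ) (v : Fin 2 → ℕ → ℝ) (i : Fin 2) (x : Fin 2 → ℕ) :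
    ∃ k, k ≤ supply T x ∧ gu T v i x = gbar T v i k x := by
  obtain ⟨k, hk, he⟩ := Finset.exists_mem_eq_sup' (s := Finset.range (supply T x + 1))
    Finset.nonempty_range_add_one (fun k => gbar T v i k x)
  exact ⟨k, by simpa using Nat.lt_succ_iff.1 (Finset.mem_range.1 hk), he⟩

lemma gu_terminal (T : ℕ) (v : Fin 2 → ℕ → ℝ) (i : Fin 2) {x : Fin 2 → ℕ}
    (h : supply T x = 0) : gu T v i x = 0 := by
  refine le_antisymm (gu_le T v i (fun k hk => ?_)) (gu_nonneg T v i x)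
  have : k = 0 := by omega
  simp [this, gbar_zero]

lemma sum_shift (f : ℕ → ℝ) (k : ℕ) :
    ∑ m ∈ Finset.Icc 1 k, f (m+1) = (∑ m ∈ Finset.Icc 1 (k+1), f m) - f 1 := by
  induction k with
  | zero => simp
  | succ n ih =>
    rw [Finset.sum_Icc_succ_top (by omega), Finset.sum_Icc_succ_top (a := 1) (b := n+1) (by omega), ih]
    ring

lemma i_ne_other (i : Fin 2) : i ≠ other i := (other_ne i).symm

lemma gbar_B {T : ℕ} {v : Fin 2 → ℕ → ℝ} {i : Fin 2} {k : ℕ} {x : Fin 2 → ℕ}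
    (hk : k + 1 ≤ supply T x) :
    gbar T v i k (x + e (other i)) = gbar T v i k x := by
  unfold gbar
  rw [supply_add_e]
  have h1 : ∀ m ∈ Finset.Icc 1 k, val v i m (x + e (other i)) = val v i m x :=
    fun m _ => val_shift_ne v (i_ne_other i) m x
  rw [Finset.sum_congr rfl h1, val_shift_self]
  have h2 : supply T x - 1 - k + 1 + 1 = supply T x - k + 1 := by omega
  rw [h2]

lemma gbar_A {T : ℕ} {v : Fin 2 → ℕ → ℝ} {i : Fin 2} {k : ℕ} {x : Fin 2 → ℕ}
    (hk : k + 1 ≤ supply T x) :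
    gbar T v i k (x + e i) =
      ((∑ m ∈ Finset.Icc 1 (k+1), val v i m x) - val v i 1 x)
        - (k : ℝ) * val v (other i) (supply T x - k) x := by
  unfold gbar
  rw [supply_add_e]
  have h1 : ∀ m ∈ Finset.Icc 1 k, val v i m (x + e i) = val v i (m+1) x :=
    fun m _ => val_shift_self v i m x
  have h5 : (∑ m ∈ Finset.Icc 1 k, val v i (m+1) x)
      = (∑ m ∈ Finset.Icc 1 (k+1), val v i m x) - val v i 1 x := sum_shift (fun m => val v i m x) k
  rw [Finset.sum_congr rfl h1, h5, val_shift_ne v (other_ne i)]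
  have h2 : supply T x - 1 - k + 1 = supply T x - k := by omega
  rw [h2]

lemma gbar_AA {T : ℕ} {v : Fin 2 → ℕ → ℝ} {i : Fin 2} {k : ℕ} {x : Fin 2 → ℕ}
    (hk : k + 2 ≤ supply T x) :
    gbar T v i k (x + e i + e i) =
      ((∑ m ∈ Finset.Icc 1 (k+2), val v i m x) - val v i 1 x - val v i 2 x)
        - (k : ℝ) * val v (other i) (supply T x - k - 1) x := by
  unfold gbar
  rw [supply_add_e, supply_add_e]
  have h1 : ∀ m ∈ Finset.Icc 1 k, val v i m (x + e i + e i) = val v i (m+2) x := by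
    intro m _
    rw [val_shift_self v i m (x + e i), val_shift_self v i (m+1) x]
  rw [Finset.sum_congr rfl h1]
  have h6 : (∑ m ∈ Finset.Icc 1 k, val v i (m+1+1) x)
      = (∑ m ∈ Finset.Icc 1 (k+1), val v i (m+1) x) - val v i (1+1) x := sum_shift (fun m => val v i (m+1) x) k
  have h4 : (∑ m ∈ Finset.Icc 1 (k+1), val v i (m+1) x)
      = (∑ m ∈ Finset.Icc 1 (k+2), val v i m x) - val v i 1 x := sum_shift (fun m => val v i m x) (k+1)
  have h3 : (∑ m ∈ Finset.Icc 1 k, val v i (m+2) x)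
      = (∑ m ∈ Finset.Icc 1 (k+2), val v i m x) - val v i 1 x - val v i 2 x := by
    have e1 : ∀ m, val v i (m+1+1) x = val v i (m+2) x := fun m => rfl
    simp only [e1] at h6
    rw [h6, h4]
  rw [h3, val_shift_ne v (other_ne i), val_shift_ne v (other_ne i)]
  have h2 : supply T x - 1 - 1 - k + 1 = supply T x - k - 1 := by omega
  rw [h2]

section Composite
variable {T : ℕ} {v : Fin 2 → ℕ → ℝ} {i : Fin 2} {x : Fin 2 → ℕ}

lemma gu_B_le (hd : IsDecision T x) : gu T v i (x + e (other i)) ≤ gu T v i x := by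
  have ht := supply_pos T hd
  refine gu_le T v i (fun k hk => ?_)
  rw [supply_add_e] at hk
  rw [gbar_B (by omega)]
  exact le_gu T v i (by omega)

lemma gu_A_le (hv : Admissible v) (hd : IsDecision T x) :
    val v i 1 x - val v (other i) 1 x + gu T v i (x + e i) ≤ gu T v i x := by
  have ht := supply_pos T hd
  have key : gu T v i (x + e i) ≤ gu T v i x - val v i 1 x + val v (other i) 1 x := by
    refine gu_le T v i (fun k hk => ?_)
    rw [supply_add_e] at hk
    rw [gbar_A (by omega)]
    have h1 : gbar T v i (k+1) x ≤ gu T v i x := le_gu T v i (by omega)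
    have h2 : gbar T v i (k+1) x
        = (∑ m ∈ Finset.Icc 1 (k+1), val v i m x)
          - ((k:ℝ)+1) * val v (other i) (supply T x - k) x := by
      unfold gbar
      have : supply T x - (k+1) + 1 = supply T x - k := by omega
      rw [this]; push_cast; ring
    have h3 : val v (other i) (supply T x - k) x ≤ val v (other i) 1 x :=
      val_antitone hv (other i) (by omega) x
    rw [h2] at h1
    linarith
  linarith

lemma gu_A_le_B (hv : Admissible v) (hd : IsDecision T x) :
    gu T v i (x + e i) ≤ gu T v i (x + e (other i)) := by
  have ht := supply_pos T hd
  refine gu_le T v i (fun k hk => ?_)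
  rw [supply_add_e] at hk
  rw [gbar_A (by omega)]
  have h1 : gbar T v i k (x + e (other i)) ≤ gu T v i (x + e (other i)) :=
    le_gu T v i (by rw [supply_add_e]; omega)
  rw [gbar_B (by omega)] at h1
  have h2 : gbar T v i k x = (∑ m ∈ Finset.Icc 1 k, val v i m x)
      - (k:ℝ) * val v (other i) (supply T x - k + 1) x := rfl
  have h4 : (∑ m ∈ Finset.Icc 1 (k+1), val v i m x)
      = (∑ m ∈ Finset.Icc 1 k, val v i m x) + val v i (k+1) x :=
    Finset.sum_Icc_succ_top (by omega) _
  have h5 : val v i (k+1) x ≤ val v i 1 x := val_antitone hv i (by omega) x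
  have h6 : val v (other i) (supply T x - k + 1) x ≤ val v (other i) (supply T x - k) x :=
    val_antitone hv (other i) (by omega) x
  have h7 : (k:ℝ) * val v (other i) (supply T x - k + 1) x
      ≤ (k:ℝ) * val v (other i) (supply T x - k) x := by
    apply mul_le_mul_of_nonneg_left h6 (by positivity)
  rw [h2] at h1
  linarith

lemma gu_eq_max (hv : Admissible v) (hd : IsDecision T x) :
    gu T v i x = max (gu T v i (x + e (other i)))
      (val v i 1 x - val v (other i) 1 x + gu T v i (x + e i)) := by
  have ht := supply_pos T hd
  refine le_antisymm ?_ (max_le (gu_B_le hd) (gu_A_le hv hd))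
  refine gu_le T v i (fun k hk => ?_)
  rcases Nat.lt_or_ge k (supply T x) with hlt | hge
  · have h1 : gbar T v i k x ≤ gu T v i (x + e (other i)) := by
      rw [← gbar_B (by omega)]
      exact le_gu T v i (by rw [supply_add_e]; omega)
    exact le_trans h1 (le_max_left _ _)
  · have hkt : k = supply T x := by omega
    subst hkt
    have h1 : gbar T v i (supply T x) x
        = val v i 1 x - val v (other i) 1 x + gbar T v i (supply T x - 1) (x + e i) := by
      rw [gbar_A (by omega)]
      have e1 : supply T x - 1 + 1 = supply T x := by omega
      have e2 : supply T x - (supply T x - 1) = 1 := by omega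
      rw [e1, e2]
      unfold gbar
      have e3 : supply T x - supply T x + 1 = 1 := by omega
      rw [e3]
      have e4 : ((supply T x - 1 : ℕ) : ℝ) = (supply T x : ℝ) - 1 := by
        push_cast [Nat.cast_sub (by omega : 1 ≤ supply T x)]
        ring
      rw [e4]
      ring
    have h2 : gbar T v i (supply T x - 1) (x + e i) ≤ gu T v i (x + e i) :=
      le_gu T v i (by rw [supply_add_e])
    have h3 : val v i 1 x - val v (other i) 1 x + gu T v i (x + e i)
        ≤ max (gu T v i (x + e (other i)))
          (val v i 1 x - val v (other i) 1 x + gu T v i (x + e i)) := le_max_right _ _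
    linarith

end Composite

def Mono (T : ℕ) (v : Fin 2 → ℕ → ℝ) (i : Fin 2) (x : Fin 2 → ℕ) : Prop :=
  ∀ k, 1 ≤ k → k ≤ supply T x →
    val v (other i) k x ≤ val v i (supply T x - k + 1) x

section MonoL
variable {T : ℕ} {v : Fin 2 → ℕ → ℝ} {i : Fin 2} {x : Fin 2 → ℕ}

lemma mono_A (hm : Mono T v i x) : Mono T v i (x + e i) := by
  intro k h1 h2
  rw [supply_add_e] at h2 ⊢
  rw [val_shift_ne v (other_ne i), val_shift_self]
  have e1 : supply T x - 1 - k + 1 + 1 = supply T x - k + 1 := by omega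
  rw [e1]
  exact hm k h1 (by omega)

lemma mono_B (hm : Mono T v i x) : Mono T v i (x + e (other i)) := by
  intro k h1 h2
  rw [supply_add_e] at h2 ⊢
  rw [val_shift_self, val_shift_ne v (i_ne_other i)]
  have h3 := hm (k+1) (by omega) (by omega)
  have e1 : supply T x - 1 - k + 1 = supply T x - (k+1) + 1 := by omega
  rw [e1]
  exact h3

lemma mono_c1_le_a1 (hv : Admissible v) (hd : IsDecision T x) (hm : Mono T v i x) :
    val v (other i) 1 x ≤ val v i 1 x := by
  have ht := supply_pos T hd
  have h1 := hm 1 le_rfl ht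
  have h2 : val v i (supply T x - 1 + 1) x ≤ val v i 1 x :=
    val_antitone hv i (by omega) x
  linarith

lemma cvx (hv : Admissible v) (h2 : 2 ≤ supply T x) (hm : Mono T v i x) :
    2 * gu T v i (x + e i) + val v i 1 x - val v i 2 x
      ≤ gu T v i x + gu T v i (x + e i + e i) := by
  obtain ⟨m1, hm1, hval⟩ := exists_gu T v i (x + e i)
  rw [supply_add_e] at hm1
  rcases Nat.eq_zero_or_pos m1 with h0 | hpos
  · subst h0
    rw [hval, gbar_zero]
    have g1 : gbar T v i 1 x ≤ gu T v i x := le_gu T v i (by omega)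
    have g2 : gbar T v i 1 x = val v i 1 x - val v (other i) (supply T x) x := by
      unfold gbar
      rw [Finset.Icc_self, Finset.sum_singleton]
      have e1 : supply T x - 1 + 1 = supply T x := by omega
      rw [e1]; push_cast; ring
    have g3 : 0 ≤ gu T v i (x + e i + e i) := gu_nonneg T v i _
    have g4 := hm (supply T x - 1) (by omega) (by omega)
    have e2 : supply T x - (supply T x - 1) + 1 = 2 := by omega
    rw [e2] at g4
    have g5 : val v (other i) (supply T x) x ≤ val v (other i) (supply T x - 1) x :=
      val_antitone hv (other i) (by omega) x
    linarith
  · obtain ⟨k, rfl⟩ : ∃ k, m1 = k + 1 := ⟨m1 - 1, by omega⟩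
    have hk2 : k + 2 ≤ supply T x := by omega
    have gA : gbar T v i (k+1) (x + e i)
        = ((∑ m ∈ Finset.Icc 1 (k+2), val v i m x) - val v i 1 x)
          - ((k:ℝ)+1) * val v (other i) (supply T x - k - 1) x := by
      rw [gbar_A (by omega)]
      have e1 : supply T x - (k+1) = supply T x - k - 1 := by omega
      have e2 : k + 1 + 1 = k + 2 := by omega
      rw [e1, e2]; push_cast; ring
    have gX : gbar T v i (k+2) x
        = (∑ m ∈ Finset.Icc 1 (k+2), val v i m x)
          - ((k:ℝ)+2) * val v (other i) (supply T x - k - 1) x := by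
      unfold gbar
      have e1 : supply T x - (k+2) + 1 = supply T x - k - 1 := by omega
      rw [e1]; push_cast; ring
    have gAA : gbar T v i k (x + e i + e i)
        = ((∑ m ∈ Finset.Icc 1 (k+2), val v i m x) - val v i 1 x - val v i 2 x)
          - (k:ℝ) * val v (other i) (supply T x - k - 1) x := gbar_AA (by omega)
    have l1 : gbar T v i (k+2) x ≤ gu T v i x := le_gu T v i (by omega)
    have l2 : gbar T v i k (x + e i + e i) ≤ gu T v i (x + e i + e i) :=
      le_gu T v i (by rw [supply_add_e, supply_add_e]; omega)
    rw [hval, gA]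
    rw [gX] at l1
    rw [gAA] at l2
    linarith

end MonoL

lemma mono_of_df {T : ℕ} {v : Fin 2 → ℕ → ℝ} {i : Fin 2} {x : Fin 2 → ℕ}
    (h : df T v (other i) x = 0) : Mono T v i x := by
  intro k h1 h2
  by_contra hc
  push_neg at hc
  have hk : k ∈ {k | 1 ≤ k ∧ k ≤ supply T x ∧
      val v (other (other i)) (supply T x - k + 1) x < val v (other i) k x} := by
    refine ⟨h1, h2, ?_⟩
    rwa [other_other]
  have hb : BddAbove {k | 1 ≤ k ∧ k ≤ supply T x ∧
      val v (other (other i)) (supply T x - k + 1) x < val v (other i) k x} :=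
    ⟨supply T x, fun m hm => hm.2.1⟩
  have := le_csSup hb hk
  rw [show sSup {k | 1 ≤ k ∧ k ≤ supply T x ∧
      val v (other (other i)) (supply T x - k + 1) x < val v (other i) k x}
      = df T v (other i) x from rfl, h] at this
  omega

def Hq (T : ℕ) (v : Fin 2 → ℕ → ℝ) (i : Fin 2) (x : Fin 2 → ℕ) : ℝ :=
  val v (other i) 1 x - val v i 1 x + gu T v i (x + e (other i)) - gu T v i (x + e i)

section HqL
variable {T : ℕ} {v : Fin 2 → ℕ → ℝ} {i : Fin 2} {x : Fin 2 → ℕ}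

lemma max0_eq (hv : Admissible v) (hd : IsDecision T x) :
    max 0 (Hq T v i x)
      = gu T v i x - (val v i 1 x - val v (other i) 1 x + gu T v i (x + e i)) := by
  set L := gu T v i (x + e (other i)) with hL
  set W := val v i 1 x - val v (other i) 1 x + gu T v i (x + e i) with hW
  have h1 : Hq T v i x = L - W := by unfold Hq; rw [hW]; ring
  have h2 : gu T v i x = max L W := gu_eq_max hv hd
  rw [h1, h2]
  have h3 : max (L - W) (W - W) = max L W - W := max_sub_sub_right L W W
  rw [sub_self] at h3
  rw [max_comm, h3]

lemma H1 (hv : Admissible v) (h2 : 2 ≤ supply T x) (hm : Mono T v i x) :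
    max 0 (Hq T v i (x + e i)) ≤ max 0 (Hq T v i x) := by
  have hd : IsDecision T x := by simp only [IsDecision]; simp only [supply] at h2; omega
  rw [max0_eq hv hd, max0_eq hv (decision_child h2 i)]
  rw [val_shift_self v i 1 x, val_shift_ne v (i_ne_other i).symm 1 x]
  have := cvx hv h2 hm
  linarith

end HqL

section Main
variable {T : ℕ} {v : Fin 2 → ℕ → ℝ} {π : Fin 2 → (Fin 2 → ℕ) → ℝ}

lemma pi_sum (hπ : TieBreaking T π) {x : Fin 2 → ℕ} (hd : IsDecision T x) (i : Fin 2) :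
    π i x + π (other i) x = 1 := by
  have := (hπ x hd).2
  fin_cases i
  · simpa [other] using this
  · have : π 1 x + π 0 x = 1 := by linarith
    simpa [other] using this

set_option maxHeartbeats 1000000 in
theorem key (hv : Admissible v) (hπ : TieBreaking T π) (E : Equilibrium T v π) :
    ∀ n x i, IsDecision T x → supply T x ≤ n → Mono T v i x →
      E.u i x = gu T v i x ∧
      E.u (other i) x ≤ max 0 (Hq T v i x) + E.u (other i) (x + e (other i)) ∧
      E.u (other i) (x + e i) ≤ E.u (other i) x ∧
      0 ≤ E.u (other i) x := by
  intro n
  induction n with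
  | zero => intro x i hd hn _; exact absurd (supply_pos T hd) (by omega)
  | succ n ih =>
  intro x i hd hn hm
  have ht := supply_pos T hd
  -- child facts
  have hsA : supply T (x + e i) = supply T x - 1 := supply_add_e T x i
  have hsB : supply T (x + e (other i)) = supply T x - 1 := supply_add_e T x (other i)
  have hchild : (E.u i (x + e i) = gu T v i (x + e i)) ∧
      (E.u i (x + e (other i)) = gu T v i (x + e (other i))) ∧
      (0 ≤ E.u (other i) (x + e i)) ∧ (0 ≤ E.u (other i) (x + e (other i))) ∧
      (E.u (other i) (x + e i)
        ≤ E.u (other i) (x + e (other i)) + max 0 (Hq T v i x)) := by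
    rcases Nat.lt_or_ge (supply T x) 2 with h1 | h2
    · have hA0 : supply T (x + e i) = 0 := by omega
      have hB0 : supply T (x + e (other i)) = 0 := by omega
      rw [E.u_terminal i _ (not_decision_of_supply_zero hA0),
          E.u_terminal i _ (not_decision_of_supply_zero hB0),
          E.u_terminal (other i) _ (not_decision_of_supply_zero hA0),
          E.u_terminal (other i) _ (not_decision_of_supply_zero hB0),
          gu_terminal T v i hA0, gu_terminal T v i hB0]
      refine ⟨rfl, rfl, le_rfl, le_rfl, ?_⟩
      have : (0:ℝ) ≤ max 0 (Hq T v i x) := le_max_left _ _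
      linarith
    · have hdA : IsDecision T (x + e i) := decision_child h2 i
      have hdB : IsDecision T (x + e (other i)) := decision_child h2 (other i)
      have ihA := ih (x + e i) i hdA (by omega) (mono_A hm)
      have ihB := ih (x + e (other i)) i hdB (by omega) (mono_B hm)
      refine ⟨ihA.1, ihB.1, ihA.2.2.2, ihB.2.2.2, ?_⟩
      -- KL chain
      have s1 : E.u (other i) (x + e i)
          ≤ max 0 (Hq T v i (x + e i)) + E.u (other i) (x + e i + e (other i)) := ihA.2.1
      have s2 : max 0 (Hq T v i (x + e i)) ≤ max 0 (Hq T v i x) := H1 hv h2 hm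
      have s3 : E.u (other i) (x + e (other i) + e i) ≤ E.u (other i) (x + e (other i)) :=
        ihB.2.2.1
      have s4 : x + e i + e (other i) = x + e (other i) + e i := add_right_comm _ _ _
      rw [s4] at s1
      linarith
  obtain ⟨uA, uB, ujA0, ujB0, KL⟩ := hchild
  -- bids
  have bi : E.b i x = val v (other i) 1 x - Hq T v i x := by
    rw [E.bid_def i x hd, uA, uB]
    rw [min_eq_right (by have := gu_A_le_B (i := i) hv hd; linarith)]
    unfold Hq; ring
  have bj : E.b (other i) x
      = min (val v (other i) 1 x)
          (val v (other i) 1 x + E.u (other i) (x + e (other i)) - E.u (other i) (x + e i)) := by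
    have := E.bid_def (other i) x hd
    rwa [other_other] at this
  have hgux : gu T v i x = max (gu T v i (x + e (other i)))
      (val v i 1 x - val v (other i) 1 x + gu T v i (x + e i)) := gu_eq_max hv hd
  have hHq : Hq T v i x = gu T v i (x + e (other i))
      - (val v i 1 x - val v (other i) 1 x + gu T v i (x + e i)) := by unfold Hq; ring
  have udefi := E.u_def i x hd
  have udefj := E.u_def (other i) x hd
  rw [other_other] at udefj
  rcases lt_trichotomy (E.b i x) (E.b (other i) x) with hlt | heq | hgt
  · -- i loses
    have hq0 : E.q i x = 0 := E.q_lose i x hd hlt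
    have hq1 : E.q (other i) x = 1 := E.q_win (other i) x hd (by rwa [other_other])
    have hHpos : 0 < Hq T v i x := by
      have h5 : E.b (other i) x ≤ val v (other i) 1 x := by rw [bj]; exact min_le_left _ _
      rw [bi] at hlt; linarith
    constructor
    · rw [udefi, hq0, uB, hgux, max_eq_left (by linarith)]; ring
    have hujx : E.u (other i) x
        = Hq T v i x + E.u (other i) (x + e (other i)) := by
      rw [udefj, hq1, bi]; ring
    refine ⟨?_, ?_, ?_⟩
    · rw [hujx]
      have : Hq T v i x ≤ max 0 (Hq T v i x) := le_max_right _ _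
      linarith
    · rw [hujx]
      rw [max_eq_right (le_of_lt hHpos)] at KL
      linarith
    · rw [hujx]; linarith
  · -- tie
    have hqi : E.q i x = π i x := E.q_tie i x hd heq
    have hqj : E.q (other i) x = π (other i) x := by
      refine E.q_tie (other i) x hd ?_
      rw [other_other]; exact heq.symm
    have hpi := (hπ x hd).1 i
    have hpj := (hπ x hd).1 (other i)
    have hps := pi_sum hπ hd i
    have hHnn : 0 ≤ Hq T v i x := by
      have h5 : E.b (other i) x ≤ val v (other i) 1 x := by rw [bj]; exact min_le_left _ _
      rw [bi] at heq; linarith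
    rw [max_eq_right hHnn] at KL
    constructor
    · rw [udefi, hqi, ← heq, bi, uA, uB, hgux, max_eq_left (by linarith), hHq]
      ring
    have hujx : E.u (other i) x
        = π (other i) x * (Hq T v i x + E.u (other i) (x + e (other i)))
          + (1 - π (other i) x) * E.u (other i) (x + e i) := by
      rw [udefj, hqj, bi]; ring
    have hconv : E.u (other i) (x + e i)
        ≤ Hq T v i x + E.u (other i) (x + e (other i)) := by linarith
    refine ⟨?_, ?_, ?_⟩
    · rw [hujx, max_eq_right hHnn]
      nlinarith [hpj.1, hpj.2, hconv]
    · rw [hujx]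
      nlinarith [hpj.1, hpj.2, hconv]
    · rw [hujx]
      nlinarith [hpj.1, hpj.2, hHnn, ujA0, ujB0]
  · -- i wins
    have hq1 : E.q i x = 1 := E.q_win i x hd hgt
    have hq0 : E.q (other i) x = 0 := E.q_lose (other i) x hd (by rwa [other_other])
    have hHneg : Hq T v i x < 0 := by
      by_contra hc
      push_neg at hc
      rw [max_eq_right hc] at KL
      have h5 : val v (other i) 1 x - Hq T v i x ≤ E.b (other i) x := by
        rw [bj]
        apply le_min (by linarith) (by linarith)
      rw [bi] at hgt; linarith
    have hmax0 : max 0 (Hq T v i x) = 0 := max_eq_left (le_of_lt hHneg)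
    rw [hmax0] at KL
    have hbjc : E.b (other i) x = val v (other i) 1 x := by
      rw [bj]
      exact min_eq_left (by linarith)
    have hmr : max (gu T v i (x + e (other i)))
        (val v i 1 x - val v (other i) 1 x + gu T v i (x + e i))
        = val v i 1 x - val v (other i) 1 x + gu T v i (x + e i) :=
      max_eq_right (by linarith)
    constructor
    · rw [udefi, hq1, hbjc, uA, hgux, hmr]; ring
    have hujx : E.u (other i) x = E.u (other i) (x + e i) := by
      rw [udefj, hq0]; ring
    refine ⟨?_, ?_, ?_⟩
    · rw [hujx, hmax0]; linarith
    · rw [hujx]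
    · rw [hujx]; exact ujA0
end Main


/-- A monopsonist's equilibrium forward utility equals her greedy utility, and she
bids the minimum of her incremental value and her threshold price. -/
theorem stmt12 (T : ℕ) (v : Fin 2 → ℕ → ℝ) (π : Fin 2 → (Fin 2 → ℕ) → ℝ)
    (hv : Admissible v) (hπ : TieBreaking T π) (E : Equilibrium T v π)
    (x : Fin 2 → ℕ) (hx : IsDecision T x) (i : Fin 2)
    (hmono : df T v (other i) x = 0) :
    E.u i x = gu T v i x ∧ E.b i x = min (val v i 1 x) (tp T v i x) := by
  have hm := mono_of_df hmono
  have main := key hv hπ E (supply T x) x i hx le_rfl hm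
  refine ⟨main.1, ?_⟩
  have huA : E.u i (x + e i) = gu T v i (x + e i) := by
    rcases Nat.lt_or_ge (supply T x) 2 with h1 | h2
    · have hA0 : supply T (x + e i) = 0 := by rw [supply_add_e]; omega
      rw [E.u_terminal i _ (not_decision_of_supply_zero hA0), gu_terminal T v i hA0]
    · exact (key hv hπ E (supply T x) (x + e i) i (decision_child h2 i)
        (by rw [supply_add_e]; omega) (mono_A hm)).1
  have huB : E.u i (x + e (other i)) = gu T v i (x + e (other i)) := by
    rcases Nat.lt_or_ge (supply T x) 2 with h1 | h2
    · have hB0 : supply T (x + e (other i)) = 0 := by rw [supply_add_e]; omega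
      rw [E.u_terminal i _ (not_decision_of_supply_zero hB0), gu_terminal T v i hB0]
    · exact (key hv hπ E (supply T x) (x + e (other i)) i (decision_child h2 (other i))
        (by rw [supply_add_e]; omega) (mono_B hm)).1
  rw [E.bid_def i x hx, huA, huB]
  rfl
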